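/- The map T_q : F₂[[q]] → F₂[[q]], sending x to x/q if q divides x and to ((1+q)x+1)/q otherwise, is conjugate to the 3x+1 map T : ℤ₂ → ℤ₂; that is, there exists a bijection h : F₂[[q]] → ℤ₂ such that h ∘ T_q = T ∘ h. -/

import Mathlib

open PowerSeries
open scoped Classical

/-- Shift map on `F₂[[q]]`: equals `x / q` whenever `q ∣ x`. -/
noncomputable def divq (x : PowerSeries (ZMod 2)) : PowerSeries (ZMod 2) :=
  PowerSeries.mk fun n => PowerSeries.coeff (n + 1) x

/-- `T_{A,B}(x) = x/q` if `q ∣ x`, and `(A*x + B)/q` otherwise.  (When `A`, `B`, `x` are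
all odd, `A*x + B` is divisible by `q`, so `divq` computes the true quotient there.) -/
noncomputable def Tab (A B x : PowerSeries (ZMod 2)) : PowerSeries (ZMod 2) :=
  if X ∣ x then divq x else divq (A * x + B)
/-- `half x` is the unique `y` with `x = 2 * y`, when `2 ∣ x` (and `0` otherwise). -/
noncomputable def half (x : ℤ_[2]) : ℤ_[2] :=
  if h : (2 : ℤ_[2]) ∣ x then h.choose else 0

/-- The `3x+1` map `T : ℤ₂ → ℤ₂`: `x/2` if `x` is even, `(3x+1)/2` if `x` is odd. -/
noncomputable def T3x1 (x : ℤ_[2]) : ℤ_[2] :=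
  if (2 : ℤ_[2]) ∣ x then half x else half (3 * x + 1)



noncomputable section CodeGeneric

variable {α : Type*} (f : α → α) (π : α → ZMod 2)

/-- The coding (parity-vector) map of a dynamical system. -/
def code (x : α) : ℕ → ZMod 2 := fun n => π (f^[n] x)

lemma code_zero (x : α) : code f π x 0 = π x := rfl

lemma code_succ (x : α) (n : ℕ) : code f π x (n + 1) = code f π (f x) n := by
  simp [code, Function.iterate_succ_apply]

/-- Backward approximation: an explicit point whose first `n` code symbols match `a`. -/
def approx (Pinv : ZMod 2 → α → α) (x₀ : α) : ℕ → (ℕ → ZMod 2) → α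
  | 0, _ => x₀
  | n+1, a => Pinv (a 0) (approx Pinv x₀ n fun k => a (k+1))

theorem code_bijective [CommRing α] [IsDomain α] (t : α) (ht : t ≠ 0) (x₀ : α)
    (hπ : ∀ x y : α, t ∣ x - y → π x = π y)
    (key : ∀ x y : α, π x = π y → ∃ c, IsUnit c ∧ t * (f x - f y) = c * (x - y))
    (hext : ∀ x y : α, (∀ n : ℕ, t ^ n ∣ x - y) → x = y)
    (Pinv : ZMod 2 → α → α)
    (hPf : ∀ b z, f (Pinv b z) = z)
    (hPπ : ∀ b z, π (Pinv b z) = b)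
    (lim : ∀ u : ℕ → α, (∀ m n : ℕ, n ≤ m → t ^ n ∣ u m - u n) →
      ∃ x, ∀ n : ℕ, t ^ n ∣ x - u n) :
    Function.Bijective (code f π) := by
  set D : ℕ → α → α → Prop := fun n x y => t ^ n ∣ x - y with hD
  have D_pi : ∀ (n : ℕ) (x y : α), D (n+1) x y → π x = π y := by
    intro n x y h
    exact hπ x y (dvd_trans (dvd_pow_self t n.succ_ne_zero) h)
  have step : ∀ (n : ℕ) (x y : α), π x = π y → D n (f x) (f y) → D (n+1) x y := by
    intro n x y hxy h
    obtain ⟨c, hcu, hc⟩ := key x y hxy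
    have h1 : t ^ (n+1) ∣ c * (x - y) := by
      rw [← hc, pow_succ']
      exact mul_dvd_mul_left t h
    exact (hcu.dvd_mul_left).mp h1
  have step' : ∀ (n : ℕ) (x y : α), D (n+1) x y → D n (f x) (f y) := by
    intro n x y h
    obtain ⟨c, hcu, hc⟩ := key x y (D_pi n x y h)
    have h1 : t ^ (n+1) ∣ t * (f x - f y) := by
      rw [hc]; exact h.mul_left c
    rw [pow_succ'] at h1
    exact (mul_dvd_mul_iff_left ht).mp h1
  have agree_of_D : ∀ (n : ℕ) (x y : α), D n x y →
      ∀ k < n, code f π x k = code f π y k := by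
    intro n
    induction n with
    | zero => intro x y _ k hk; omega
    | succ n ih =>
      intro x y h k hk
      match k with
      | 0 => rw [code_zero, code_zero]; exact D_pi n x y h
      | k+1 =>
        rw [code_succ, code_succ]
        exact ih (f x) (f y) (step' n x y h) k (by omega)
  have D_of_agree : ∀ (n : ℕ) (x y : α),
      (∀ k < n, code f π x k = code f π y k) → D n x y := by
    intro n
    induction n with
    | zero => intro x y _; simp only [hD, pow_zero]; exact one_dvd _
    | succ n ih =>
      intro x y h
      refine step n x y ?_ (ih (f x) (f y) fun k hk => ?_)
      · have := h 0 (by omega); rwa [code_zero, code_zero] at this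
      · rw [← code_succ, ← code_succ]
        exact h (k+1) (by omega)
  constructor
  · intro x y h
    exact hext x y fun n => D_of_agree n x y fun k _ => congrFun h k
  · intro a
    have hF : ∀ (n : ℕ) (a : ℕ → ZMod 2) (k : ℕ), k < n →
        code f π (approx Pinv x₀ n a) k = a k := by
      intro n
      induction n with
      | zero => intro a k hk; omega
      | succ n ih =>
        intro a k hk
        match k with
        | 0 => rw [code_zero, approx, hPπ]
        | k+1 =>
          rw [code_succ, approx, hPf]
          exact ih _ k (by omega)
    set u : ℕ → α := fun n => approx Pinv x₀ n a with hu
    have hcau : ∀ m n : ℕ, n ≤ m → D n (u m) (u n) := by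
      intro m n hnm
      exact D_of_agree n _ _ fun k hk => by
        rw [hF m a k (lt_of_lt_of_le hk hnm), hF n a k hk]
    obtain ⟨x, hx⟩ := lim u hcau
    refine ⟨x, funext fun n => ?_⟩
    have h1 := agree_of_D (n+1) x (u (n+1)) (hx (n+1)) n (by omega)
    rw [h1]; exact hF (n+1) a n (by omega)

end CodeGeneric




noncomputable section Z2side

lemma zmod2_cases : ∀ c : ZMod 2, c ≠ 0 → c = 1 := by decide

lemma two_cast : ((2 : ℕ) : ℤ_[2]) = 2 := by norm_cast

lemma two_dvd_iff (x : ℤ_[2]) : (2 : ℤ_[2]) ∣ x ↔ PadicInt.toZMod x = 0 := by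
  rw [← Ideal.mem_span_singleton, ← two_cast, ← PadicInt.maximalIdeal_eq_span_p,
    ← PadicInt.ker_toZMod, RingHom.mem_ker]

lemma two_dvd_sub_iff (x y : ℤ_[2]) :
    (2 : ℤ_[2]) ∣ x - y → PadicInt.toZMod x = PadicInt.toZMod y := by
  intro h
  have := (two_dvd_iff (x - y)).mp h
  rw [map_sub, sub_eq_zero] at this
  exact this

lemma padic_two_nz : (2 : ℤ_[2]) ≠ 0 := by
  rw [← two_cast]
  intro h
  have h2 := @PadicInt.norm_p 2 ⟨Nat.prime_two⟩
  rw [h, norm_zero] at h2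
  norm_num at h2

lemma toZMod_three : PadicInt.toZMod (3 : ℤ_[2]) = 1 := by
  have : (3 : ℤ_[2]) = ((3:ℕ) : ℤ_[2]) := by norm_cast
  rw [this, map_natCast]
  decide

lemma isUnit_three : IsUnit (3 : ℤ_[2]) := by
  rcases eq_or_lt_of_le (PadicInt.norm_le_one (3 : ℤ_[2])) with h | h
  · exact PadicInt.isUnit_iff.mpr h
  · exfalso
    have hd : ((2:ℕ) : ℤ_[2]) ∣ 3 := (PadicInt.norm_lt_one_iff_dvd _).mp h
    rw [two_cast, two_dvd_iff, toZMod_three] at hd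
    exact one_ne_zero hd

lemma two_mul_half {x : ℤ_[2]} (h : (2 : ℤ_[2]) ∣ x) : 2 * half x = x := by
  rw [half, dif_pos h]
  exact h.choose_spec.symm

lemma T3x1_even {x : ℤ_[2]} (h : (2 : ℤ_[2]) ∣ x) : 2 * T3x1 x = x := by
  rw [T3x1, if_pos h]; exact two_mul_half h

lemma odd_step_dvd {x : ℤ_[2]} (h : ¬ (2 : ℤ_[2]) ∣ x) : (2 : ℤ_[2]) ∣ 3 * x + 1 := by
  rw [two_dvd_iff] at h ⊢
  rw [map_add, map_mul, map_one, toZMod_three, one_mul, zmod2_cases _ h]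
  decide

lemma T3x1_odd {x : ℤ_[2]} (h : ¬ (2 : ℤ_[2]) ∣ x) : 2 * T3x1 x = 3 * x + 1 := by
  rw [T3x1, if_neg h]; exact two_mul_half (odd_step_dvd h)

lemma key2 : ∀ x y : ℤ_[2], PadicInt.toZMod x = PadicInt.toZMod y →
    ∃ c, IsUnit c ∧ (2 : ℤ_[2]) * (T3x1 x - T3x1 y) = c * (x - y) := by
  intro x y hxy
  by_cases hx : (2 : ℤ_[2]) ∣ x
  · have hy : (2 : ℤ_[2]) ∣ y := by
      rw [two_dvd_iff] at hx ⊢; rw [← hxy]; exact hx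
    exact ⟨1, isUnit_one, by rw [mul_sub, T3x1_even hx, T3x1_even hy, one_mul]⟩
  · have hy : ¬ (2 : ℤ_[2]) ∣ y := by
      rw [two_dvd_iff] at hx ⊢; rw [← hxy]; exact hx
    refine ⟨3, isUnit_three, ?_⟩
    rw [mul_sub, T3x1_odd hx, T3x1_odd hy]
    ring

lemma dvd_iff_norm_le (n : ℕ) (z : ℤ_[2]) :
    (2 : ℤ_[2]) ^ n ∣ z ↔ ‖z‖ ≤ ((2 : ℝ) ^ n)⁻¹ := by
  have h := PadicInt.norm_le_pow_iff_mem_span_pow z n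
  rw [Ideal.mem_span_singleton, two_cast] at h
  have h2 : ((2 : ℝ)) ^ (-(n:ℤ)) = ((2 : ℝ) ^ n)⁻¹ := by
    rw [zpow_neg, zpow_natCast]
  rw [← h2]
  constructor
  · intro hd; exact h.mpr hd
  · intro hn; exact h.mp hn

lemma ext2 : ∀ x y : ℤ_[2], (∀ n : ℕ, (2 : ℤ_[2]) ^ n ∣ x - y) → x = y := by
  intro x y h
  have hn : ∀ n : ℕ, ‖x - y‖ ≤ ((2 : ℝ) ^ n)⁻¹ := fun n => (dvd_iff_norm_le n _).mp (h n)
  have htend : Filter.Tendsto (fun n : ℕ => ((2 : ℝ) ^ n)⁻¹) Filter.atTop (nhds 0) := by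
    rw [show (fun n : ℕ => ((2:ℝ)^n)⁻¹) = fun n : ℕ => ((2:ℝ)⁻¹)^n from by
      funext n; simp [inv_pow]]
    exact tendsto_pow_atTop_nhds_zero_of_lt_one (by norm_num) (by norm_num)
  have : ‖x - y‖ ≤ 0 := ge_of_tendsto htend (Filter.Eventually.of_forall hn)
  have : x - y = 0 := by
    rw [← norm_eq_zero]; exact le_antisymm this (norm_nonneg _)
  exact sub_eq_zero.mp this

lemma lim2 : ∀ u : ℕ → ℤ_[2], (∀ m n : ℕ, n ≤ m → (2 : ℤ_[2]) ^ n ∣ u m - u n) →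
    ∃ x, ∀ n : ℕ, (2 : ℤ_[2]) ^ n ∣ x - u n := by
  intro u hu
  have hnorm : ∀ m n : ℕ, n ≤ m → ‖u m - u n‖ ≤ ((2:ℝ)^n)⁻¹ :=
    fun m n h => (dvd_iff_norm_le n _).mp (hu m n h)
  have hcauchy : CauchySeq u := by
    apply cauchySeq_of_le_tendsto_0 (fun N => 2 * ((2:ℝ)^N)⁻¹)
    · intro n m N hn hm
      rw [dist_eq_norm]
      calc ‖u n - u m‖ ≤ ‖u n - u N‖ + ‖u N - u m‖ := by
            have : u n - u m = (u n - u N) + (u N - u m) := by ring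
            rw [this]; exact norm_add_le _ _
        _ ≤ ((2:ℝ)^N)⁻¹ + ((2:ℝ)^N)⁻¹ := by
            refine add_le_add (hnorm n N hn) ?_
            rw [← norm_neg]; simpa using hnorm m N hm
        _ = 2 * ((2:ℝ)^N)⁻¹ := by ring
    · have : Filter.Tendsto (fun N : ℕ => ((2:ℝ)^N)⁻¹) Filter.atTop (nhds 0) := by
        rw [show (fun N : ℕ => ((2:ℝ)^N)⁻¹) = fun N : ℕ => ((2:ℝ)⁻¹)^N from by
          funext N; simp [inv_pow]]
        exact tendsto_pow_atTop_nhds_zero_of_lt_one (by norm_num) (by norm_num)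
      simpa using this.const_mul (2:ℝ)
  obtain ⟨x, hx⟩ := cauchySeq_tendsto_of_complete hcauchy
  refine ⟨x, fun n => ?_⟩
  rw [dvd_iff_norm_le]
  have htend : Filter.Tendsto (fun m => ‖u m - u n‖) Filter.atTop (nhds ‖x - u n‖) :=
    ((hx.sub tendsto_const_nhds).norm)
  refine le_of_tendsto htend ?_
  filter_upwards [Filter.eventually_ge_atTop n] with m hm
  exact hnorm m n hm

end Z2side




noncomputable section PSside

local notation "PS" => PowerSeries (ZMod 2)

lemma zmod2_cases' : ∀ c : ZMod 2, c ≠ 0 → c = 1 := by decide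

lemma coeff_divq (n : ℕ) (x : PS) :
    PowerSeries.coeff n (divq x) = PowerSeries.coeff (n+1) x := by
  rw [divq, PowerSeries.coeff_mk]

lemma divq_X_mul (y : PS) : divq (X * y) = y := by
  ext n
  rw [coeff_divq, PowerSeries.coeff_succ_X_mul]

lemma X_mul_divq {x : PS} (h : (X : PS) ∣ x) : X * divq x = x := by
  obtain ⟨y, rfl⟩ := h
  rw [divq_X_mul]

abbrev Tq : PS → PS := Tab (1 + X) 1

lemma Tq_even {x : PS} (h : (X : PS) ∣ x) : X * Tq x = x := by
  show X * Tab (1+X) 1 x = x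
  rw [Tab, if_pos h]; exact X_mul_divq h

lemma odd_dvd {x : PS} (h : ¬ (X : PS) ∣ x) : (X : PS) ∣ ((1 + X) * x + 1) := by
  rw [PowerSeries.X_dvd_iff] at h ⊢
  have hx := zmod2_cases' _ h
  simp [map_add, map_mul, map_one, hx]
  decide

lemma Tq_odd {x : PS} (h : ¬ (X : PS) ∣ x) : X * Tq x = (1 + X) * x + 1 := by
  show X * Tab (1+X) 1 x = (1+X)*x+1
  rw [Tab, if_neg h]; exact X_mul_divq (odd_dvd h)

lemma isUnit_one_add_X : IsUnit ((1 : PS) + X) := by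
  rw [PowerSeries.isUnit_iff_constantCoeff]
  simp

lemma keyq : ∀ x y : PS, constantCoeff (R := ZMod 2) x = constantCoeff (R := ZMod 2) y →
    ∃ c, IsUnit c ∧ (X : PS) * (Tq x - Tq y) = c * (x - y) := by
  intro x y hxy
  by_cases hx : (X : PS) ∣ x
  · have hy : (X : PS) ∣ y := by
      rw [PowerSeries.X_dvd_iff] at hx ⊢; rw [← hxy]; exact hx
    exact ⟨1, isUnit_one, by rw [mul_sub, Tq_even hx, Tq_even hy, one_mul]⟩
  · have hy : ¬ (X : PS) ∣ y := by
      rw [PowerSeries.X_dvd_iff] at hx ⊢; rw [← hxy]; exact hx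
    refine ⟨1 + X, isUnit_one_add_X, ?_⟩
    rw [mul_sub, Tq_odd hx, Tq_odd hy]
    ring

lemma hπq : ∀ x y : PS, (X : PS) ∣ x - y →
    constantCoeff (R := ZMod 2) x = constantCoeff (R := ZMod 2) y := by
  intro x y h
  rw [PowerSeries.X_dvd_iff, map_sub, sub_eq_zero] at h
  exact h

lemma extq : ∀ x y : PS, (∀ n : ℕ, (X : PS) ^ n ∣ x - y) → x = y := by
  intro x y h
  rw [← sub_eq_zero]
  ext k
  have := PowerSeries.X_pow_dvd_iff.mp (h (k+1)) k (by omega)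
  simpa using this

lemma limq : ∀ u : ℕ → PS, (∀ m n : ℕ, n ≤ m → (X : PS) ^ n ∣ u m - u n) →
    ∃ x, ∀ n : ℕ, (X : PS) ^ n ∣ x - u n := by
  intro u hu
  refine ⟨PowerSeries.mk fun k => PowerSeries.coeff k (u (k+1)), fun n => ?_⟩
  rw [PowerSeries.X_pow_dvd_iff]
  intro k hk
  rw [map_sub, PowerSeries.coeff_mk, sub_eq_zero]
  have hkn : k + 1 ≤ n := hk
  have := PowerSeries.X_pow_dvd_iff.mp (hu n (k+1) hkn) k (by omega)
  rw [map_sub, sub_eq_zero] at this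
  exact this.symm

end PSside

section PinvZ2

noncomputable def Pinv2 (b : ZMod 2) (z : ℤ_[2]) : ℤ_[2] :=
  if b = 0 then 2 * z else ↑(isUnit_three.unit⁻¹) * (2 * z - 1)

lemma half_two_mul (y : ℤ_[2]) : half (2 * y) = y :=
  mul_left_cancel₀ padic_two_nz (two_mul_half ⟨y, rfl⟩)

lemma three_mul_inv (w : ℤ_[2]) : (3 : ℤ_[2]) * (↑(isUnit_three.unit⁻¹) * w) = w := by
  calc (3 : ℤ_[2]) * (↑(isUnit_three.unit⁻¹) * w)
      = (↑isUnit_three.unit * ↑(isUnit_three.unit⁻¹)) * w := by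
        rw [isUnit_three.unit_spec]; ring
    _ = w := by rw [isUnit_three.unit.mul_inv, one_mul]

lemma Pinv2_odd (z : ℤ_[2]) : ¬ (2 : ℤ_[2]) ∣ ↑(isUnit_three.unit⁻¹) * (2 * z - 1) := by
  intro hd
  have h3 : (2 : ℤ_[2]) ∣ 3 * (↑(isUnit_three.unit⁻¹) * (2 * z - 1)) := hd.mul_left 3
  rw [three_mul_inv] at h3
  have h2 : (2 : ℤ_[2]) ∣ 2 * z := ⟨z, rfl⟩
  have h1 : (2 : ℤ_[2]) ∣ 1 := by
    have := dvd_sub h2 h3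
    simpa using this
  rw [two_dvd_iff, map_one] at h1
  exact one_ne_zero h1

lemma Pinv2_f : ∀ (b : ZMod 2) (z : ℤ_[2]), T3x1 (Pinv2 b z) = z := by
  intro b z
  by_cases hb : b = 0
  · rw [Pinv2, if_pos hb, T3x1, if_pos ⟨z, rfl⟩, half_two_mul]
  · rw [Pinv2, if_neg hb, T3x1, if_neg (Pinv2_odd z)]
    have h : 3 * (↑(isUnit_three.unit⁻¹) * (2 * z - 1)) + 1 = 2 * z := by
      rw [three_mul_inv]; ring
    rw [h, half_two_mul]

lemma Pinv2_π : ∀ (b : ZMod 2) (z : ℤ_[2]), PadicInt.toZMod (Pinv2 b z) = b := by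
  intro b z
  by_cases hb : b = 0
  · rw [Pinv2, if_pos hb, hb]
    exact (two_dvd_iff _).mp ⟨z, rfl⟩
  · rw [Pinv2, if_neg hb, zmod2_cases b hb]
    apply zmod2_cases'
    intro h0
    exact Pinv2_odd z ((two_dvd_iff _).mpr h0)

end PinvZ2

section PinvPS

local notation "PS" => PowerSeries (ZMod 2)

noncomputable def Pinvq (b : ZMod 2) (z : PS) : PS :=
  if b = 0 then X * z else ((isUnit_one_add_X.unit⁻¹ : (PowerSeries (ZMod 2))ˣ) : PowerSeries (ZMod 2)) * (X * z + 1)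

lemma one_add_X_mul_inv (w : PS) :
    ((1 : PS) + X) * (((isUnit_one_add_X.unit⁻¹ : (PowerSeries (ZMod 2))ˣ) : PowerSeries (ZMod 2)) * w) = w := by
  calc ((1 : PS) + X) * (((isUnit_one_add_X.unit⁻¹ : (PowerSeries (ZMod 2))ˣ) : PowerSeries (ZMod 2)) * w)
      = (↑isUnit_one_add_X.unit * ((isUnit_one_add_X.unit⁻¹ : (PowerSeries (ZMod 2))ˣ) : PowerSeries (ZMod 2))) * w := by
        rw [isUnit_one_add_X.unit_spec]; ring
    _ = w := by rw [isUnit_one_add_X.unit.mul_inv, one_mul]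

lemma one_add_one_PS : (1 : PS) + 1 = 0 := by
  ext n
  rw [map_add, map_zero]
  exact CharTwo.add_self_eq_zero _

lemma Pinvq_cc (z : PS) :
    constantCoeff (R := ZMod 2) (((isUnit_one_add_X.unit⁻¹ : (PowerSeries (ZMod 2))ˣ) : PowerSeries (ZMod 2)) * (X * z + 1)) = 1 := by
  have h := congrArg (constantCoeff (R := ZMod 2)) (one_add_X_mul_inv (X * z + 1))
  rw [map_mul] at h
  have h1 : constantCoeff (R := ZMod 2) ((1 : PS) + X) = 1 := by simp
  have h2 : constantCoeff (R := ZMod 2) ((X : PS) * z + 1) = 1 := by simp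
  rw [h1, one_mul, h2] at h
  rw [map_mul, h2, mul_one]
  have := congrArg (constantCoeff (R := ZMod 2)) (one_add_X_mul_inv 1)
  rw [map_mul, map_mul, h1, one_mul, map_one] at this
  simpa using this

lemma Pinvq_odd (z : PS) : ¬ (X : PS) ∣ ((isUnit_one_add_X.unit⁻¹ : (PowerSeries (ZMod 2))ˣ) : PowerSeries (ZMod 2)) * (X * z + 1) := by
  rw [PowerSeries.X_dvd_iff, Pinvq_cc]
  exact one_ne_zero

lemma Pinvq_f : ∀ (b : ZMod 2) (z : PS), Tab (1 + X) 1 (Pinvq b z) = z := by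
  intro b z
  by_cases hb : b = 0
  · rw [Pinvq, if_pos hb, Tab, if_pos ⟨z, rfl⟩, divq_X_mul]
  · rw [Pinvq, if_neg hb, Tab, if_neg (Pinvq_odd z)]
    have h : ((1 : PS) + X) * (((isUnit_one_add_X.unit⁻¹ : (PowerSeries (ZMod 2))ˣ) : PowerSeries (ZMod 2)) * (X * z + 1)) + 1 = X * z := by
      rw [one_add_X_mul_inv, add_assoc, one_add_one_PS, add_zero]
    rw [h, divq_X_mul]

lemma Pinvq_π : ∀ (b : ZMod 2) (z : PS), constantCoeff (R := ZMod 2) (Pinvq b z) = b := by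
  intro b z
  by_cases hb : b = 0
  · rw [Pinvq, if_pos hb, hb]
    simp
  · rw [Pinvq, if_neg hb, zmod2_cases b hb, Pinvq_cc]

end PinvPS


/-- The map `T_q = T_{1+q,1}` is conjugate to the `3x+1` map `T` on `ℤ₂`:
there is a bijection `h : F₂[[q]] → ℤ₂` with `h ∘ T_q = T ∘ h`. -/
theorem Tq_conjugate_T3x1 :
    ∃ h : PowerSeries (ZMod 2) → ℤ_[2],
      Function.Bijective h ∧ h ∘ Tab (1 + X) 1 = T3x1 ∘ h := by
  have bij2 : Function.Bijective (code T3x1 PadicInt.toZMod) :=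
    code_bijective T3x1 PadicInt.toZMod 2 padic_two_nz 0 two_dvd_sub_iff key2 ext2
      Pinv2 Pinv2_f Pinv2_π lim2
  have bijq : Function.Bijective (code (Tab (1 + X) 1) (constantCoeff (R := ZMod 2))) :=
    code_bijective (Tab (1 + X) 1) (constantCoeff (R := ZMod 2)) X PowerSeries.X_ne_zero 0
      hπq keyq extq Pinvq Pinvq_f Pinvq_π limq
  let Φq := Equiv.ofBijective _ bijq
  let Φ2 := Equiv.ofBijective _ bij2
  refine ⟨fun x => Φ2.symm (Φq x), (Φq.trans Φ2.symm).bijective, ?_⟩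
  funext x
  show Φ2.symm (Φq (Tab (1 + X) 1 x)) = T3x1 (Φ2.symm (Φq x))
  apply Φ2.injective
  rw [Equiv.apply_symm_apply]
  have h2 : ∀ y : ℤ_[2], Φ2 (T3x1 y) = fun n => Φ2 y (n + 1) := by
    intro y; funext n
    show code T3x1 PadicInt.toZMod (T3x1 y) n = code T3x1 PadicInt.toZMod y (n + 1)
    rw [code_succ]
  have hq : Φq (Tab (1 + X) 1 x) = fun n => Φq x (n + 1) := by
    funext n
    show code (Tab (1 + X) 1) (constantCoeff (R := ZMod 2)) (Tab (1 + X) 1 x) n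
       = code (Tab (1 + X) 1) (constantCoeff (R := ZMod 2)) x (n + 1)
    rw [code_succ]
  rw [hq, h2 (Φ2.symm (Φq x)), Equiv.apply_symm_apply]
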